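/- arXiv:1902.06599 — 2 statements merged into one kernel-verified Lean document; each statement's English description precedes it below -/
import Mathlib

section
/- Let P be a simple histogram, let v ∈ V(P) be a vertex that is r-reflex or the left base vertex, and let u ∈ [v, r(v)] be a vertex distinct from v and from r(v). Then I(u) ⊆ [v, r(v)]. -/
open Classical Set

noncomputable section

/-- A *double histogram*: an `x`-monotone orthogonal polygon in general position whose
base line lies on the `x`-axis.  It is described by its bottom columns (over the
breakpoints `xs` with depths `d < 0`) and its top columns (over the breakpoints `ys`
with heights `h > 0`).  A *simple histogram* is the special case `n = 1`, where the
upper boundary is the single (base) edge at height `h 0`. -/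
structure DoubleHistogram where
  m : ℕ
  n : ℕ
  hm : 0 < m
  hn : 0 < n
  xs : Fin (m + 1) → ℝ
  ys : Fin (n + 1) → ℝ
  d : Fin m → ℝ
  h : Fin n → ℝ
  xs_mono : StrictMono xs
  ys_mono : StrictMono ys
  left_eq : ys 0 = xs 0
  right_eq : ys (Fin.last n) = xs (Fin.last m)
  d_neg : ∀ i, d i < 0
  h_pos : ∀ j, 0 < h j
  /-- general position: no three vertices on a horizontal line -/
  d_inj : Function.Injective d
  h_inj : Function.Injective h
  /-- general position: no three vertices on a vertical line -/
  gen_pos : ∀ (i : Fin (m + 1)) (j : Fin (n + 1)), xs i = ys j →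
      (i = 0 ∧ j = 0) ∨ (i = Fin.last m ∧ j = Fin.last n)

/-- Among the reals in `A`, the one of minimum absolute value
(i.e. "closest to the base line"). -/
def closestToBase (A : Set ℝ) : ℝ :=
  sSup {y | y ∈ A ∧ ∀ y' ∈ A, |y| ≤ |y'|}

/-- The leftmost point of `S` among those minimizing the distance `|y|` to the base line. -/
def leftmostLowest (S : Set (ℝ × ℝ)) : ℝ × ℝ :=
  (sInf {x | ∃ y, (x, y) ∈ S ∧ ∀ q ∈ S, |y| ≤ |q.2|},
    closestToBase {y | (sInf {x | ∃ y', (x, y') ∈ S ∧ ∀ q ∈ S, |y'| ≤ |q.2|}, y) ∈ S})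

namespace DoubleHistogram

variable (H : DoubleHistogram)

/-- The polygon `P`, as a closed region of the plane. -/
def region : Set (ℝ × ℝ) :=
  (⋃ i : Fin H.m, Icc (H.xs i.castSucc) (H.xs i.succ) ×ˢ Icc (H.d i) 0) ∪
    ⋃ j : Fin H.n, Icc (H.ys j.castSucc) (H.ys j.succ) ×ˢ Icc 0 (H.h j)

/-- The vertex set `V(P)`. -/
def verts : Set (ℝ × ℝ) :=
  (⋃ i : Fin H.m,
      ({(H.xs i.castSucc, H.d i), (H.xs i.succ, H.d i)} : Set (ℝ × ℝ))) ∪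
    ⋃ j : Fin H.n,
      ({(H.ys j.castSucc, H.h j), (H.ys j.succ, H.h j)} : Set (ℝ × ℝ))

/-- `p` and `q` are co-visible: the axis-parallel rectangle they span lies in `P`. -/
def covisible (p q : ℝ × ℝ) : Prop :=
  Icc (min p.1 q.1) (max p.1 q.1) ×ˢ Icc (min p.2 q.2) (max p.2 q.2) ⊆ H.region

lemma covisible_symm {p q : ℝ × ℝ} (hpq : H.covisible p q) : H.covisible q p := by
  unfold covisible at hpq ⊢
  rwa [min_comm q.1 p.1, max_comm q.1 p.1, min_comm q.2 p.2, max_comm q.2 p.2]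

/-- The (unweighted) visibility graph `G(P)` on the vertices of `P`. -/
def visGraph : SimpleGraph ↥H.verts where
  Adj u v := u ≠ v ∧ H.covisible ↑u ↑v
  symm := ⟨fun _ _ hu => ⟨hu.1.symm, H.covisible_symm hu.2⟩⟩
  loopless := ⟨fun _ hu => hu.1 rfl⟩

/-- The closed neighborhood `N(v)`: `v` together with the vertices it sees. -/
def Nbr (v : ℝ × ℝ) : Set (ℝ × ℝ) :=
  {w | w ∈ H.verts ∧ (w = v ∨ H.covisible v w)}

/-- The abscissa where the leftward horizontal ray from `v` hits the boundary of `P`. -/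
def lhit (v : ℝ × ℝ) : ℝ :=
  sInf {x | x ≤ v.1 ∧ Icc x v.1 ×ˢ ({v.2} : Set ℝ) ⊆ H.region}

/-- The abscissa where the rightward horizontal ray from `v` hits the boundary of `P`. -/
def rhit (v : ℝ × ℝ) : ℝ :=
  sSup {x | v.1 ≤ x ∧ Icc v.1 x ×ˢ ({v.2} : Set ℝ) ⊆ H.region}

/-- The `y`-coordinate, among the vertices of `P` with abscissa `x` lying on the same side
of the base line as `side`, of the one closest to the base line (i.e. the endpoint of the
vertical edge at `x` closer to the base line). -/
def nearY (x : ℝ) (side : ℝ) : ℝ :=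
  if side < 0 then sSup {y | y < 0 ∧ (x, y) ∈ H.verts}
  else sInf {y | 0 < y ∧ (x, y) ∈ H.verts}

/-- The left point `ℓ(v)` (double-histogram version): if the leftward ray from `v` hits the
left boundary then the hit point, otherwise the endpoint of the hit vertical edge closer to
the base line. -/
def lpt (v : ℝ × ℝ) : ℝ × ℝ :=
  if H.lhit v = H.xs 0 then (H.xs 0, v.2) else (H.lhit v, H.nearY (H.lhit v) v.2)

/-- The right point `r(v)` (double-histogram version). -/
def rpt (v : ℝ × ℝ) : ℝ × ℝ :=
  if H.rhit v = H.xs (Fin.last H.m) then (H.xs (Fin.last H.m), v.2)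
  else (H.rhit v, H.nearY (H.rhit v) v.2)

/-- The left base vertex (for a simple histogram, i.e. `n = 1`). -/
def baseL : ℝ × ℝ := (H.xs 0, H.h ⟨0, H.hn⟩)

/-- The right base vertex (for a simple histogram, i.e. `n = 1`). -/
def baseR : ℝ × ℝ := (H.xs (Fin.last H.m), H.h ⟨0, H.hn⟩)

/-- The left point `ℓ(v)` (simple-histogram version): if the leftward ray from `v` hits the
left boundary then the left base vertex, otherwise the endpoint of the hit vertical edge
closer to the base edge. -/
def lptS (v : ℝ × ℝ) : ℝ × ℝ :=
  if H.lhit v = H.xs 0 then H.baseL else (H.lhit v, H.nearY (H.lhit v) v.2)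

/-- The right point `r(v)` (simple-histogram version). -/
def rptS (v : ℝ × ℝ) : ℝ × ℝ :=
  if H.rhit v = H.xs (Fin.last H.m) then H.baseR
  else (H.rhit v, H.nearY (H.rhit v) v.2)

/-- The interval `[p, q]`: all vertices of `P` between `p` and `q`. -/
def ivl (p q : ℝ × ℝ) : Set (ℝ × ℝ) :=
  {u | u ∈ H.verts ∧ p.1 ≤ u.1 ∧ u.1 ≤ q.1}

/-- The interval `I(v) = [ℓ(v), r(v)]` of a vertex (double-histogram version). -/
def Iv (v : ℝ × ℝ) : Set (ℝ × ℝ) := H.ivl (H.lpt v) (H.rpt v)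

/-- The interval `I(v) = [ℓ(v), r(v)]` of a vertex (simple-histogram version). -/
def IvS (v : ℝ × ℝ) : Set (ℝ × ℝ) := H.ivl (H.lptS v) (H.rptS v)

/-- The corresponding vertex `cv(v)`: the unique other vertex sharing a horizontal edge
(equivalently, by general position, the `y`-coordinate) with `v`. -/
def cv (v : ℝ × ℝ) : ℝ × ℝ :=
  (sSup {x | (x, v.2) ∈ H.verts ∧ x ≠ v.1}, v.2)

/-- `v` is a left vertex: the left endpoint of its horizontal edge. -/
def IsLeftVert (v : ℝ × ℝ) : Prop :=
  (∃ i : Fin H.m, v = (H.xs i.castSucc, H.d i)) ∨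
    ∃ j : Fin H.n, v = (H.ys j.castSucc, H.h j)

/-- `v` is a right vertex: the right endpoint of its horizontal edge. -/
def IsRightVert (v : ℝ × ℝ) : Prop :=
  (∃ i : Fin H.m, v = (H.xs i.succ, H.d i)) ∨
    ∃ j : Fin H.n, v = (H.ys j.succ, H.h j)

/-- `v` is an `ℓ`-reflex vertex (a left vertex with interior angle `3π/2`). -/
def IsLReflex (v : ℝ × ℝ) : Prop :=
  (∃ i : Fin H.m, ∃ _ : 0 < (i : ℕ),
      v = (H.xs i.castSucc, H.d i) ∧
        H.d ⟨(i : ℕ) - 1, lt_of_le_of_lt (Nat.sub_le _ _) i.isLt⟩ < H.d i) ∨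
    ∃ j : Fin H.n, ∃ _ : 0 < (j : ℕ),
      v = (H.ys j.castSucc, H.h j) ∧
        H.h j < H.h ⟨(j : ℕ) - 1, lt_of_le_of_lt (Nat.sub_le _ _) j.isLt⟩

/-- `v` is an `r`-reflex vertex (a right vertex with interior angle `3π/2`). -/
def IsRReflex (v : ℝ × ℝ) : Prop :=
  (∃ i : Fin H.m, ∃ hi : (i : ℕ) + 1 < H.m,
      v = (H.xs i.succ, H.d i) ∧ H.d ⟨(i : ℕ) + 1, hi⟩ < H.d i) ∨
    ∃ j : Fin H.n, ∃ hj : (j : ℕ) + 1 < H.n,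
      v = (H.ys j.succ, H.h j) ∧ H.h j < H.h ⟨(j : ℕ) + 1, hj⟩

/-- `v` is a reflex vertex. -/
def IsReflex (v : ℝ × ℝ) : Prop := H.IsLReflex v ∨ H.IsRReflex v

/-- The near dominator `nd(s,t)`: for `t` strictly right of `s`, the rightmost vertex of
`N(s)` to the left of `t`, ties broken towards the base line (symmetric otherwise). -/
def nd (s t : ℝ × ℝ) : ℝ × ℝ :=
  if s.1 < t.1 then
    let nx := sSup {x | (∃ y, (x, y) ∈ H.Nbr s) ∧ x ≤ t.1}
    (nx, closestToBase {y | (nx, y) ∈ H.Nbr s})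
  else
    let nx := sInf {x | (∃ y, (x, y) ∈ H.Nbr s) ∧ t.1 ≤ x}
    (nx, closestToBase {y | (nx, y) ∈ H.Nbr s})

/-- The far dominator `fd(s,t)`: for `t` strictly right of `s`, the leftmost vertex of
`N(s)` to the right of `t`, ties broken towards the base line; if there is no such vertex,
the point `r(s)` (symmetric otherwise). -/
def fd (s t : ℝ × ℝ) : ℝ × ℝ :=
  if s.1 < t.1 then
    if ∃ w ∈ H.Nbr s, t.1 ≤ w.1 then
      let nx := sInf {x | (∃ y, (x, y) ∈ H.Nbr s) ∧ t.1 ≤ x}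
      (nx, closestToBase {y | (nx, y) ∈ H.Nbr s})
    else H.rpt s
  else
    if ∃ w ∈ H.Nbr s, w.1 ≤ t.1 then
      let nx := sSup {x | (∃ y, (x, y) ∈ H.Nbr s) ∧ x ≤ t.1}
      (nx, closestToBase {y | (nx, y) ∈ H.Nbr s})
    else H.lpt s

/-- The sequence `a^i(s)`: `a^0(s) = s`, and `a^i(s)` is the leftmost vertex of
`A^i(s) = {v ∈ N(s) : ℓ(v)_x < ℓ(a^{i-1}(s))_x}` (ties towards the base line),
or `a^{i-1}(s)` if `A^i(s)` is empty. -/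
def aSeq (s : ℝ × ℝ) : ℕ → ℝ × ℝ := fun k =>
  Nat.rec (motive := fun _ => ℝ × ℝ) s
    (fun _ prev =>
      let A : Set (ℝ × ℝ) := {v | v ∈ H.Nbr s ∧ (H.lpt v).1 < (H.lpt prev).1}
      if A = ∅ then prev
      else
        let ax := sInf {x | ∃ y, (x, y) ∈ A}
        (ax, closestToBase {y | (ax, y) ∈ A}))
    k

/-- The sequence `b^i(s)`: `b^0(s) = s`, and `b^i(s)` is the rightmost vertex of
`B^i(s) = {v ∈ N(s) : r(v)_x > r(b^{i-1}(s))_x}` (ties towards the base line),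
or `b^{i-1}(s)` if `B^i(s)` is empty. -/
def bSeq (s : ℝ × ℝ) : ℕ → ℝ × ℝ := fun k =>
  Nat.rec (motive := fun _ => ℝ × ℝ) s
    (fun _ prev =>
      let B : Set (ℝ × ℝ) := {v | v ∈ H.Nbr s ∧ (H.rpt prev).1 < (H.rpt v).1}
      if B = ∅ then prev
      else
        let bx := sSup {x | ∃ y, (x, y) ∈ B}
        (bx, closestToBase {y | (bx, y) ∈ B}))
    k

/-- The pair of the `k`-th bottom dominator `bd^k(s)` and `k`-th top dominator `td^k(s)`:
`bd^0(s) = td^0(s) = s`; for `k > 0`, with `I^k(s) = I(bd^{k-1}(s)) ∪ I(td^{k-1}(s))`,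
`bd^k(s)` is the leftmost vertex of `I^k(s)⁻` minimizing the distance to the base line,
and `td^k(s)` the leftmost vertex of `I^k(s)⁺` minimizing the distance to the base line;
if one of the two sets is empty, the corresponding dominator equals the other one. -/
def bdtd (s : ℝ × ℝ) : ℕ → (ℝ × ℝ) × (ℝ × ℝ) := fun k =>
  Nat.rec (motive := fun _ => (ℝ × ℝ) × (ℝ × ℝ)) (s, s)
    (fun _ p =>
      let J : Set (ℝ × ℝ) := H.Iv p.1 ∪ H.Iv p.2
      let Jm : Set (ℝ × ℝ) := {v | v ∈ J ∧ v.2 < 0}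
      let Jp : Set (ℝ × ℝ) := {v | v ∈ J ∧ 0 < v.2}
      if Jm = ∅ then (leftmostLowest Jp, leftmostLowest Jp)
      else if Jp = ∅ then (leftmostLowest Jm, leftmostLowest Jm)
      else (leftmostLowest Jm, leftmostLowest Jp))
    k

/-- The `k`-th interval `I^k(s)`: `I^0(s) = {s}` and
`I^{k+1}(s) = I(bd^k(s)) ∪ I(td^k(s))`. -/
def Ipow (s : ℝ × ℝ) : ℕ → Set (ℝ × ℝ) := fun k =>
  Nat.rec (motive := fun _ => Set (ℝ × ℝ)) {s}
    (fun k _ => H.Iv (H.bdtd s k).1 ∪ H.Iv (H.bdtd s k).2) k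

/-- `w` lies on a shortest path from `s` to `t` in the visibility graph. -/
def OnShortestPath (s t w : ↥H.verts) : Prop :=
  ∃ p : H.visGraph.Walk s t, p.length = H.visGraph.dist s t ∧ w ∈ p.support

end DoubleHistogram

/-- A routing scheme for a graph `G`: every vertex carries a binary label and a binary
routing table, and the routing function maps (link table of the current vertex, routing
table of the current vertex, label of the target, current header) to the next vertex
together with the new header. -/
structure RoutingScheme {V : Type} (G : SimpleGraph V) where
  lab : V → List Bool
  tab : V → List Bool
  route : Set (List Bool) → List Bool → List Bool → List Bool → V × List Bool

namespace RoutingScheme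

variable {V : Type} {G : SimpleGraph V} (R : RoutingScheme G)

/-- One routing step at vertex `p` with header `h`, towards the target `t`: the routing
function is applied to the link table of `p` (the labels of its closed neighborhood),
the routing table of `p`, the label of `t` and the header `h`. -/
def step (t p : V) (h : List Bool) : V × List Bool :=
  R.route (R.lab '' {w | w = p ∨ G.Adj p w}) (R.tab p) (R.lab t) h

/-- The routing sequence from `s` towards `t`, starting with the empty header. -/
def seq (s t : V) : ℕ → V × List Bool := fun k =>
  Nat.rec (motive := fun _ => V × List Bool) (s, ([] : List Bool))
    (fun _ q => R.step t q.1 q.2) k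

end RoutingScheme

namespace DoubleHistogram

variable (H : DoubleHistogram)

lemma region_closed : IsClosed H.region := by
  unfold region
  exact IsClosed.union
    (isClosed_iUnion_of_finite fun i => isClosed_Icc.prod isClosed_Icc)
    (isClosed_iUnion_of_finite fun j => isClosed_Icc.prod isClosed_Icc)

lemma region_x {p : ℝ × ℝ} (hp : p ∈ H.region) :
    H.xs 0 ≤ p.1 ∧ p.1 ≤ H.xs (Fin.last H.m) := by
  unfold region at hp
  rcases hp with hp | hp <;>
    simp only [mem_iUnion, mem_prod, mem_Icc] at hp
  · obtain ⟨i, ⟨h1, h2⟩, _⟩ := hp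
    exact ⟨le_trans (H.xs_mono.monotone (Fin.zero_le _)) h1,
      le_trans h2 (H.xs_mono.monotone (Fin.le_last _))⟩
  · obtain ⟨j, ⟨h1, h2⟩, _⟩ := hp
    constructor
    · calc H.xs 0 = H.ys 0 := H.left_eq.symm
        _ ≤ H.ys j.castSucc := H.ys_mono.monotone (Fin.zero_le _)
        _ ≤ p.1 := h1
    · calc p.1 ≤ H.ys j.succ := h2
        _ ≤ H.ys (Fin.last H.n) := H.ys_mono.monotone (Fin.le_last _)
        _ = H.xs (Fin.last H.m) := H.right_eq

lemma verts_sub : H.verts ⊆ H.region := by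
  intro w hw
  unfold verts at hw
  unfold region
  simp only [mem_union, mem_iUnion, mem_insert_iff, mem_singleton_iff,
    mem_prod, mem_Icc] at hw ⊢
  rcases hw with ⟨i, hw | hw⟩ | ⟨j, hw | hw⟩ <;> subst hw
  · exact Or.inl ⟨i, ⟨le_refl _, (H.xs_mono (Fin.castSucc_lt_succ (i := i))).le⟩,
      le_refl _, (H.d_neg i).le⟩
  · exact Or.inl ⟨i, ⟨(H.xs_mono (Fin.castSucc_lt_succ (i := i))).le, le_refl _⟩,
      le_refl _, (H.d_neg i).le⟩
  · exact Or.inr ⟨j, ⟨le_refl _, (H.ys_mono (Fin.castSucc_lt_succ (i := j))).le⟩,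
      (H.h_pos j).le, le_refl _⟩
  · exact Or.inr ⟨j, ⟨(H.ys_mono (Fin.castSucc_lt_succ (i := j))).le, le_refl _⟩,
      (H.h_pos j).le, le_refl _⟩

lemma verts_sub' : H.verts ⊆ H.region := H.verts_sub

lemma col_depth {t y : ℝ} (h : (t, y) ∈ H.region) (hy : y < 0) {c : Fin H.m}
    (h1 : H.xs c.castSucc < t) (h2 : t < H.xs c.succ) : H.d c ≤ y := by
  unfold region at h
  rcases h with h | h <;> simp only [mem_iUnion, mem_prod, mem_Icc] at h
  · obtain ⟨q, ⟨hq1, hq2⟩, hq3, _⟩ := h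
    have l1 : q.castSucc < c.succ := H.xs_mono.lt_iff_lt.mp (lt_of_le_of_lt hq1 h2)
    have l2 : c.castSucc < q.succ := H.xs_mono.lt_iff_lt.mp (lt_of_lt_of_le h1 hq2)
    simp only [Fin.lt_def, Fin.coe_castSucc, Fin.val_succ] at l1 l2
    have hqc : q = c := Fin.ext (by omega)
    subst hqc
    exact hq3
  · obtain ⟨j, _, hj, _⟩ := h
    linarith

lemma region_up {t y y' : ℝ} (h : (t, y) ∈ H.region) (h1 : y ≤ y') (h2 : y' ≤ 0) :
    (t, y') ∈ H.region := by
  unfold region at h ⊢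
  rcases h with h | h <;>
    simp only [mem_union, mem_iUnion, mem_prod, mem_Icc] at h ⊢
  · obtain ⟨i, hx, hy1, hy2⟩ := h
    exact Or.inl ⟨i, hx, le_trans hy1 h1, h2⟩
  · obtain ⟨j, hx, hy1, hy2⟩ := h
    exact Or.inr ⟨j, hx, by linarith, by linarith [H.h_pos j]⟩

lemma mem_rhit_set_self {v : ℝ × ℝ} (hv : v ∈ H.region) :
    v.1 ∈ {x | v.1 ≤ x ∧ Icc v.1 x ×ˢ ({v.2} : Set ℝ) ⊆ H.region} := by
  refine ⟨le_refl _, ?_⟩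
  rintro ⟨a, b⟩ ⟨ha, hb⟩
  simp only [mem_Icc] at ha
  simp only [mem_singleton_iff] at hb
  have ha' : a = v.1 := le_antisymm ha.2 ha.1
  subst ha'; subst hb
  simpa using hv

lemma mem_lhit_set_self {v : ℝ × ℝ} (hv : v ∈ H.region) :
    v.1 ∈ {x | x ≤ v.1 ∧ Icc x v.1 ×ˢ ({v.2} : Set ℝ) ⊆ H.region} := by
  refine ⟨le_refl _, ?_⟩
  rintro ⟨a, b⟩ ⟨ha, hb⟩
  simp only [mem_Icc] at ha
  simp only [mem_singleton_iff] at hb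
  have ha' : a = v.1 := le_antisymm ha.2 ha.1
  subst ha'; subst hb
  simpa using hv

lemma rhit_bdd (v : ℝ × ℝ) :
    BddAbove {x | v.1 ≤ x ∧ Icc v.1 x ×ˢ ({v.2} : Set ℝ) ⊆ H.region} := by
  refine ⟨H.xs (Fin.last H.m), fun x hx => ?_⟩
  have hm : (x, v.2) ∈ H.region := hx.2 ⟨mem_Icc.mpr ⟨hx.1, le_refl x⟩, rfl⟩
  exact (H.region_x hm).2

lemma lhit_bdd (v : ℝ × ℝ) :
    BddBelow {x | x ≤ v.1 ∧ Icc x v.1 ×ˢ ({v.2} : Set ℝ) ⊆ H.region} := by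
  refine ⟨H.xs 0, fun x hx => ?_⟩
  have hm : (x, v.2) ∈ H.region := hx.2 ⟨mem_Icc.mpr ⟨le_refl x, hx.1⟩, rfl⟩
  exact (H.region_x hm).1

lemma le_rhit {v : ℝ × ℝ} {x : ℝ} (h1 : v.1 ≤ x)
    (h2 : Icc v.1 x ×ˢ ({v.2} : Set ℝ) ⊆ H.region) : x ≤ H.rhit v :=
  le_csSup (H.rhit_bdd v) ⟨h1, h2⟩

lemma rhit_self_le {v : ℝ × ℝ} (hv : v ∈ H.region) : v.1 ≤ H.rhit v :=
  le_csSup (H.rhit_bdd v) (H.mem_rhit_set_self hv)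

lemma rhit_le_last {v : ℝ × ℝ} (hv : v ∈ H.region) :
    H.rhit v ≤ H.xs (Fin.last H.m) := by
  apply csSup_le ⟨v.1, H.mem_rhit_set_self hv⟩
  intro x hx
  have hm : (x, v.2) ∈ H.region := hx.2 ⟨mem_Icc.mpr ⟨hx.1, le_refl x⟩, rfl⟩
  exact (H.region_x hm).2

lemma le_lhit {v : ℝ × ℝ} (hv : v ∈ H.region) {b : ℝ}
    (hb : ∀ x, x ≤ v.1 → Icc x v.1 ×ˢ ({v.2} : Set ℝ) ⊆ H.region → b ≤ x) :
    b ≤ H.lhit v :=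
  le_csInf ⟨v.1, H.mem_lhit_set_self hv⟩ fun x hx => hb x hx.1 hx.2

lemma rhit_seg {v : ℝ × ℝ} (hv : v ∈ H.region) {t : ℝ}
    (h1 : v.1 ≤ t) (h2 : t ≤ H.rhit v) : (t, v.2) ∈ H.region := by
  have hne : Set.Nonempty {x | v.1 ≤ x ∧ Icc v.1 x ×ˢ ({v.2} : Set ℝ) ⊆ H.region} :=
    ⟨v.1, H.mem_rhit_set_self hv⟩
  have hT : IsClosed {s : ℝ | (s, v.2) ∈ H.region} :=
    H.region_closed.preimage (continuous_id.prodMk continuous_const)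
  rcases eq_or_lt_of_le h2 with heq | h2
  · subst heq
    rcases eq_or_lt_of_le h1 with h1 | h1
    · rw [← h1]; simpa using hv
    · have hsub : Ico v.1 (H.rhit v) ⊆ {s : ℝ | (s, v.2) ∈ H.region} := by
        intro s hs
        obtain ⟨x, hx, hsx⟩ := exists_lt_of_lt_csSup hne hs.2
        exact hx.2 ⟨mem_Icc.mpr ⟨hs.1, hsx.le⟩, rfl⟩
      have hcl : H.rhit v ∈ closure (Ico v.1 (H.rhit v)) := by
        rw [closure_Ico (ne_of_lt h1)]
        exact ⟨h1.le, le_refl _⟩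
      exact hT.closure_subset_iff.mpr hsub hcl
  · obtain ⟨x, hx, htx⟩ := exists_lt_of_lt_csSup hne h2
    exact hx.2 ⟨mem_Icc.mpr ⟨h1, htx.le⟩, rfl⟩

lemma rptS_fst (v : ℝ × ℝ) : (H.rptS v).1 = H.rhit v := by
  unfold rptS baseR
  split <;> simp_all

lemma lptS_fst (v : ℝ × ℝ) : (H.lptS v).1 = H.lhit v := by
  unfold lptS baseL
  split <;> simp_all

end DoubleHistogram

/-- In a simple histogram, if `v` is `r`-reflex or the left base vertex
and `u ∈ [v, r(v)]` is distinct from `v` and `r(v)`, then `I(u) ⊆ [v, r(v)]`. -/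
theorem interval_inclusion
    (H : DoubleHistogram) (hSimple : H.n = 1)
    (v : ℝ × ℝ) (hv : v ∈ H.verts) (hvc : H.IsRReflex v ∨ v = H.baseL)
    (u : ℝ × ℝ) (hu : u ∈ H.ivl v (H.rptS v)) (huv : u ≠ v) (hur : u ≠ H.rptS v) :
    H.IvS u ⊆ H.ivl v (H.rptS v) := by
  obtain ⟨huV, hul, hur'⟩ := hu
  rw [H.rptS_fst] at hur'
  have hureg : u ∈ H.region := H.verts_sub huV
  have hvreg : v ∈ H.region := H.verts_sub hv
  suffices hkey : v.1 ≤ H.lhit u ∧ H.rhit u ≤ H.rhit v by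
    intro w hw
    obtain ⟨hwV, hw1, hw2⟩ := hw
    rw [H.lptS_fst] at hw1
    rw [H.rptS_fst] at hw2
    refine ⟨hwV, le_trans (le_trans hkey.1 hw1) (le_refl _), ?_⟩
    rw [H.rptS_fst]
    exact le_trans hw2 hkey.2
  rcases hvc with hrefl | hbase
  · -- v is r-reflex
    rcases hrefl with ⟨i, hi, hveq, hdi⟩ | ⟨j, hj, _⟩
    swap
    · exact absurd hj (by omega)
    subst hveq
    have hvx : H.xs 0 < H.xs i.succ := H.xs_mono (by simp [Fin.lt_def])
    have hul' : H.xs i.succ ≤ u.1 := hul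
    set R := H.rhit (H.xs i.succ, H.d i) with hR
    have hur2 : u.1 ≤ R := hur'
    have hRlast : R ≤ H.xs (Fin.last H.m) := H.rhit_le_last hvreg
    have hseg : ∀ t : ℝ, H.xs i.succ ≤ t → t ≤ R → (t, H.d i) ∈ H.region :=
      fun t ha hb => H.rhit_seg hvreg ha hb
    -- Claim: every admissible u lies strictly below depth `d i`.
    have hU : u.2 < H.d i := by
      have huVc := huV
      unfold DoubleHistogram.verts at huVc
      simp only [mem_union, mem_iUnion, mem_insert_iff, mem_singleton_iff] at huVc
      rcases huVc with ⟨p, hp | hp⟩ | ⟨j, hp | hp⟩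
      · -- u = (xs p.castSucc, d p) : a left vertex
        subst hp
        have hx1 : H.xs i.succ ≤ H.xs p.castSucc := hul'
        have hx2 : H.xs p.castSucc ≤ R := hur2
        have hip : i.val + 1 ≤ p.val := by
          have h := (H.xs_mono.le_iff_le).mp hx1
          simpa [Fin.le_def] using h
        show H.d p < H.d i
        rcases lt_or_eq_of_le hx2 with hlt | heqR
        · have hcs : H.xs p.castSucc < H.xs p.succ := H.xs_mono (Fin.castSucc_lt_succ (i := p))
          have hmin : H.xs p.castSucc < min (H.xs p.succ) R := lt_min hcs hlt
          set t := (H.xs p.castSucc + min (H.xs p.succ) R) / 2 with htd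
          have ht1 : H.xs p.castSucc < t := by rw [htd]; linarith
          have ht2 : t < min (H.xs p.succ) R := by rw [htd]; linarith
          have hreg := hseg t (le_trans hx1 ht1.le) (le_trans ht2.le (min_le_right _ _))
          have hle := H.col_depth hreg (H.d_neg i) ht1 (lt_of_lt_of_le ht2 (min_le_left _ _))
          exact lt_of_le_of_ne hle
            (fun hE => absurd (congrArg Fin.val (H.d_inj hE)) (by omega))
        · by_cases hp1 : p.val = i.val + 1
          · have hpe : p = ⟨i.val + 1, hi⟩ := Fin.ext hp1
            rw [hpe]
            exact hdi
          · have hip2 : i.val + 2 ≤ p.val := by omega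
            have hplt : p.val < H.m := p.isLt
            set p' : Fin H.m := ⟨p.val - 1, by omega⟩ with hp'
            have hps : p'.succ = p.castSucc := Fin.ext (by simp [hp']; omega)
            have hcs' : H.xs p'.castSucc < H.xs p'.succ := H.xs_mono (Fin.castSucc_lt_succ (i := p'))
            set t := (H.xs p'.castSucc + H.xs p'.succ) / 2 with htd
            have ht1 : H.xs p'.castSucc < t := by rw [htd]; linarith
            have ht2 : t < H.xs p'.succ := by rw [htd]; linarith
            have hbeg : H.xs i.succ ≤ H.xs p'.castSucc :=
              H.xs_mono.monotone (by simp [Fin.le_def, hp']; omega)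
            have hend : H.xs p'.succ = R := by rw [hps]; exact heqR
            have hreg := hseg t (le_trans hbeg ht1.le) (by rw [← hend]; exact ht2.le)
            have hdp' : H.d p' ≤ H.d i := H.col_depth hreg (H.d_neg i) ht1 ht2
            have hdp'lt : H.d p' < H.d i := lt_of_le_of_ne hdp'
              (fun hE => absurd (congrArg Fin.val (H.d_inj hE)) (by simp [hp']; omega))
            have hnotlast : R ≠ H.xs (Fin.last H.m) := by
              rw [← heqR]
              intro hE
              have hE2 := congrArg Fin.val (H.xs_mono.injective hE)
              simp at hE2
              omega
            have hrpt : H.rptS (H.xs i.succ, H.d i) = (R, H.nearY R (H.d i)) := by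
              unfold DoubleHistogram.rptS
              rw [← hR, if_neg hnotlast]
            have hY : {y | y < 0 ∧ ((R, y) : ℝ × ℝ) ∈ H.verts} = {H.d p', H.d p} := by
              ext y
              simp only [mem_setOf_eq, mem_insert_iff, mem_singleton_iff]
              constructor
              · rintro ⟨hy0, hyv⟩
                unfold DoubleHistogram.verts at hyv
                simp only [mem_union, mem_iUnion, mem_insert_iff, mem_singleton_iff,
                  Prod.mk.injEq] at hyv
                rcases hyv with ⟨q, ⟨hqx, hqy⟩ | ⟨hqx, hqy⟩⟩ | ⟨j, ⟨_, hqy⟩ | ⟨_, hqy⟩⟩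
                · -- R = xs q.castSucc ⇒ q = p
                  right
                  rw [← heqR] at hqx
                  have := congrArg Fin.val (H.xs_mono.injective hqx)
                  simp at this
                  have hqp : q = p := (Fin.ext this).symm
                  rw [hqy, hqp]
                · -- R = xs q.succ ⇒ q = p'
                  left
                  rw [← heqR] at hqx
                  have := congrArg Fin.val (H.xs_mono.injective hqx)
                  simp at this
                  have hqp : q = p' := Fin.ext (by simp [hp']; omega)
                  rw [hqy, hqp]
                · exact absurd hqy (by have := H.h_pos j; intro hE; linarith)
                · exact absurd hqy (by have := H.h_pos j; intro hE; linarith)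
              · rintro (rfl | rfl)
                · refine ⟨H.d_neg p', ?_⟩
                  unfold DoubleHistogram.verts
                  simp only [mem_union, mem_iUnion, mem_insert_iff, mem_singleton_iff]
                  refine Or.inl ⟨p', Or.inr ?_⟩
                  rw [hend]
                · refine ⟨H.d_neg p, ?_⟩
                  unfold DoubleHistogram.verts
                  simp only [mem_union, mem_iUnion, mem_insert_iff, mem_singleton_iff]
                  refine Or.inl ⟨p, Or.inl ?_⟩
                  rw [heqR]
            have hnear : H.nearY R (H.d i) = max (H.d p') (H.d p) := by
              unfold DoubleHistogram.nearY
              rw [if_pos (H.d_neg i), hY, csSup_pair]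
            have hune : H.d p ≠ max (H.d p') (H.d p) := by
              intro hE
              apply hur
              rw [hrpt, hnear, ← hE, heqR]
            rcases max_cases (H.d p') (H.d p) with ⟨hm1, hm2⟩ | ⟨hm1, hm2⟩
            · have hppne : H.d p ≠ H.d p' :=
                fun hE => absurd (congrArg Fin.val (H.d_inj hE)) (by simp [hp']; omega)
              exact lt_trans (lt_of_le_of_ne hm2 hppne) hdp'lt
            · exact absurd hm1.symm hune
      · -- u = (xs p.succ, d p) : a right vertex
        subst hp
        have hx1 : H.xs i.succ ≤ H.xs p.succ := hul'
        have hpi : i.val ≤ p.val := by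
          have h := (H.xs_mono.le_iff_le).mp hx1
          rw [Fin.le_def] at h
          simp only [Fin.val_succ] at h
          omega
        have hvne : p.val ≠ i.val := by
          intro hE
          exact huv (by rw [show p = i from Fin.ext hE])
        set t := (H.xs p.castSucc + H.xs p.succ) / 2 with htd
        have hcs : H.xs p.castSucc < H.xs p.succ := H.xs_mono (Fin.castSucc_lt_succ (i := p))
        have ht1 : H.xs p.castSucc < t := by rw [htd]; linarith
        have ht2 : t < H.xs p.succ := by rw [htd]; linarith
        have hbeg : H.xs i.succ ≤ H.xs p.castSucc :=
          H.xs_mono.monotone (by simp [Fin.le_def]; omega)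
        have hreg := hseg t (le_trans hbeg ht1.le) (le_trans ht2.le hur2)
        have hle := H.col_depth hreg (H.d_neg i) ht1 ht2
        exact lt_of_le_of_ne hle (fun hE => hvne (congrArg Fin.val (H.d_inj hE)))
      · -- u = (ys j.castSucc, h j) : impossible, too far left
        exfalso
        subst hp
        have hj0 : (j.castSucc : Fin (H.n + 1)) = 0 := Fin.ext (by
          simp only [Fin.coe_castSucc, Fin.val_zero]
          have := j.isLt
          omega)
        have hys : H.ys j.castSucc = H.xs 0 := by rw [hj0]; exact H.left_eq
        have := hul'
        rw [show ((H.ys j.castSucc, H.h j) : ℝ × ℝ).1 = H.xs 0 from hys] at this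
        linarith
      · -- u = (ys j.succ, h j) : must equal r(v), excluded
        exfalso
        subst hp
        have hjl : (j.succ : Fin (H.n + 1)) = Fin.last H.n :=
          Fin.ext (by
            simp only [Fin.val_succ, Fin.val_last]
            have := j.isLt
            omega)
        have hys : H.ys j.succ = H.xs (Fin.last H.m) := by rw [hjl]; exact H.right_eq
        have hRlast' : R = H.xs (Fin.last H.m) := by
          refine le_antisymm hRlast ?_
          rw [← hys]
          exact hur2
        apply hur
        unfold DoubleHistogram.rptS
        rw [← hR, if_pos hRlast']
        unfold DoubleHistogram.baseR
        have hje : j = ⟨0, H.hn⟩ := Fin.ext (by have := j.isLt; omega)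
        rw [hys, hje]
    constructor
    · -- v.1 ≤ lhit u
      apply H.le_lhit hureg
      intro x hx hseg'
      by_contra hcon
      push_neg at hcon
      have hcs : H.xs i.castSucc < H.xs i.succ := H.xs_mono (Fin.castSucc_lt_succ (i := i))
      set t := max x ((H.xs i.castSucc + H.xs i.succ) / 2) with htd
      have ht1 : H.xs i.castSucc < t :=
        lt_of_lt_of_le (by linarith) (le_max_right _ _)
      have ht2 : t < H.xs i.succ := max_lt hcon (by linarith)
      have htx : x ≤ t := le_max_left _ _
      have htu : t ≤ u.1 := le_trans ht2.le hul'
      have hregm : (t, u.2) ∈ H.region := hseg' ⟨mem_Icc.mpr ⟨htx, htu⟩, rfl⟩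
      have hdep := H.col_depth hregm (by linarith [H.d_neg i]) ht1 ht2
      linarith
    · -- rhit u ≤ rhit v
      have hne : Set.Nonempty {x | u.1 ≤ x ∧ Icc u.1 x ×ˢ ({u.2} : Set ℝ) ⊆ H.region} :=
        ⟨u.1, H.mem_rhit_set_self hureg⟩
      show H.rhit u ≤ R
      unfold DoubleHistogram.rhit
      apply csSup_le hne
      intro x hx
      obtain ⟨hx1, hx2⟩ := hx
      rw [hR]
      apply H.le_rhit (show ((H.xs i.succ, H.d i) : ℝ × ℝ).1 ≤ x from le_trans hul' hx1)
      rintro ⟨a, b⟩ ⟨ha, hb⟩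
      simp only [mem_Icc] at ha
      simp only [mem_singleton_iff] at hb
      subst hb
      rcases le_or_gt a u.1 with hau | hau
      · exact H.rhit_seg hvreg ha.1 (le_trans hau hur2)
      · have hm' : (a, u.2) ∈ H.region := hx2 ⟨mem_Icc.mpr ⟨hau.le, ha.2⟩, rfl⟩
        exact H.region_up hm' hU.le (H.d_neg i).le
  · -- v is the left base vertex
    subst hbase
    constructor
    · apply H.le_lhit hureg
      intro x hx hseg'
      have hm : ((x, u.2) : ℝ × ℝ) ∈ H.region := hseg' ⟨mem_Icc.mpr ⟨le_refl x, hx⟩, rfl⟩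
      exact (H.region_x hm).1
    · have htop : Icc (H.baseL).1 (H.xs (Fin.last H.m)) ×ˢ ({(H.baseL).2} : Set ℝ) ⊆
          H.region := by
        rintro ⟨a, b⟩ ⟨ha, hb⟩
        simp only [mem_Icc] at ha
        simp only [mem_singleton_iff] at hb
        subst hb
        unfold DoubleHistogram.region
        right
        rw [mem_iUnion]
        refine ⟨⟨0, H.hn⟩, ?_⟩
        have e1 : H.ys (⟨0, H.hn⟩ : Fin H.n).castSucc = H.xs 0 := by
          rw [show ((⟨0, H.hn⟩ : Fin H.n).castSucc) = (0 : Fin (H.n + 1)) from rfl]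
          exact H.left_eq
        have e2 : H.ys (⟨0, H.hn⟩ : Fin H.n).succ = H.xs (Fin.last H.m) := by
          rw [show ((⟨0, H.hn⟩ : Fin H.n).succ) = Fin.last H.n from Fin.ext (by simp [hSimple])]
          exact H.right_eq
        simp only [mem_prod, mem_Icc]
        refine ⟨⟨?_, ?_⟩, (H.h_pos _).le, le_refl _⟩
        · rw [e1]; exact ha.1
        · rw [e2]; exact ha.2
      have hlastle : H.xs (Fin.last H.m) ≤ H.rhit H.baseL :=
        H.le_rhit (show (H.baseL).1 ≤ H.xs (Fin.last H.m) from
          H.xs_mono.monotone (Fin.zero_le _)) htop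
      exact le_trans (H.rhit_le_last hureg) hlastle
end
end

section
/- Let P be a simple histogram and let v, w ∈ V(P) be co-visible vertices such that v is either r-reflex or the left base vertex, and w is either ℓ-reflex or the right base vertex. Let s and t be vertices with s ∈ [v, w] and t ∉ [v, w]. Then every path in the visibility graph G(P) from s to t includes v or w. -/
open Classical Set

noncomputable section

namespace DoubleHistogram

variable (H : DoubleHistogram)

lemma xs_inj : Function.Injective H.xs := H.xs_mono.injective

/-- If a point of the region has `y < 0` and lies strictly inside column `k`
(horizontally), then its depth is at least `d k`. -/
lemma region_col {x y : ℝ} {k : Fin H.m} (hmem : (x, y) ∈ H.region)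
    (hy : y < 0) (h1 : H.xs k.castSucc < x) (h2 : x < H.xs k.succ) : H.d k ≤ y := by
  unfold region at hmem
  rcases hmem with hmem | hmem
  · rw [Set.mem_iUnion] at hmem
    obtain ⟨j, hj⟩ := hmem
    simp only [Set.mem_prod, Set.mem_Icc] at hj
    obtain ⟨⟨hjx1, hjx2⟩, hjy1, hjy2⟩ := hj
    have hjk : j = k := by
      by_contra hne
      have hne' : (j : ℕ) ≠ (k : ℕ) := fun hc => hne (Fin.ext hc)
      rcases lt_or_gt_of_ne hne' with hlt | hgt
      · have hle : H.xs j.succ ≤ H.xs k.castSucc :=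
          H.xs_mono.monotone (by simp [Fin.le_def]; omega)
        linarith
      · have hle : H.xs k.succ ≤ H.xs j.castSucc :=
          H.xs_mono.monotone (by simp [Fin.le_def]; omega)
        linarith
    subst hjk
    exact hjy1
  · rw [Set.mem_iUnion] at hmem
    obtain ⟨j, hj⟩ := hmem
    simp only [Set.mem_prod, Set.mem_Icc] at hj
    linarith [hj.2.1]

/-- Classification of vertices of a simple histogram. -/
lemma verts_classify (hS : H.n = 1) {a : ℝ × ℝ} (ha : a ∈ H.verts) :
    (∃ k : Fin H.m, a = (H.xs k.castSucc, H.d k) ∨ a = (H.xs k.succ, H.d k)) ∨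
      a = H.baseL ∨ a = H.baseR := by
  unfold verts at ha
  rcases ha with ha | ha
  · rw [Set.mem_iUnion] at ha
    obtain ⟨k, hk⟩ := ha
    simp only [Set.mem_insert_iff, Set.mem_singleton_iff] at hk
    exact Or.inl ⟨k, hk⟩
  · rw [Set.mem_iUnion] at ha
    obtain ⟨j, hj⟩ := ha
    simp only [Set.mem_insert_iff, Set.mem_singleton_iff] at hj
    have hjlt := j.isLt
    have hj0 : j = ⟨0, H.hn⟩ := Fin.ext (by omega)
    have hcs : j.castSucc = (0 : Fin (H.n + 1)) := Fin.ext (by simp; omega)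
    have hsc : j.succ = Fin.last H.n := Fin.ext (by simp [Fin.val_last]; omega)
    rcases hj with hj | hj
    · refine Or.inr (Or.inl ?_)
      rw [hj, hcs, H.left_eq, hj0]
      rfl
    · refine Or.inr (Or.inr ?_)
      rw [hj, hsc, H.right_eq, hj0]
      rfl

/-- Every vertex has abscissa between `xs 0` and `xs (last m)`. -/
lemma verts_xrange (hS : H.n = 1) {a : ℝ × ℝ} (ha : a ∈ H.verts) :
    H.xs 0 ≤ a.1 ∧ a.1 ≤ H.xs (Fin.last H.m) := by
  rcases H.verts_classify hS ha with ⟨k, hk | hk⟩ | h' | h'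
  · rw [hk]
    exact ⟨H.xs_mono.monotone (Fin.zero_le _), H.xs_mono.monotone (Fin.le_last _)⟩
  · rw [hk]
    exact ⟨H.xs_mono.monotone (Fin.zero_le _), H.xs_mono.monotone (Fin.le_last _)⟩
  · rw [h']
    exact ⟨le_refl _, H.xs_mono.monotone (Fin.le_last _)⟩
  · rw [h']
    exact ⟨H.xs_mono.monotone (Fin.zero_le _), le_refl _⟩

/-- If the rectangle spanned by `v` and `w` straddles the interior of column `k`,
then `d k ≤ min v.2 w.2`. -/
lemma colBound {v w : ℝ × ℝ} (hco : H.covisible v w) (hvw : v.1 < w.1)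
    (hM : min v.2 w.2 < 0) {k : Fin H.m}
    (h1 : H.xs k.castSucc < w.1) (h2 : v.1 < H.xs k.succ) :
    H.d k ≤ min v.2 w.2 := by
  have hcc : H.xs k.castSucc < H.xs k.succ := H.xs_mono (Fin.castSucc_lt_succ : Fin.castSucc k < Fin.succ k)
  set L := max v.1 (H.xs k.castSucc) with hL
  set R := min w.1 (H.xs k.succ) with hR
  have hLR : L < R := max_lt (lt_min hvw h2) (lt_min h1 hcc)
  set x1 := (L + R) / 2 with hx1
  have hx1a : L < x1 := by rw [hx1]; linarith
  have hx1b : x1 < R := by rw [hx1]; linarith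
  have hmem : (x1, min v.2 w.2) ∈ H.region := by
    apply hco
    rw [Set.mem_prod]
    refine ⟨Set.mem_Icc.mpr ⟨?_, ?_⟩, Set.mem_Icc.mpr ⟨le_refl _, min_le_max⟩⟩
    · exact le_trans (min_le_left _ _) (le_of_lt (lt_of_le_of_lt (le_max_left _ _) hx1a))
    · exact le_trans (le_of_lt (lt_of_lt_of_le hx1b (min_le_left _ _))) (le_max_right _ _)
  exact H.region_col hmem hM (lt_of_le_of_lt (le_max_right _ _) hx1a)
    (lt_of_lt_of_le hx1b (min_le_right _ _))

/-- If the rectangle spanned by covisible `a`, `b` (with `a` below the base line)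
contains an interior point of column `k` at height `a.2`, then `d k ≤ a.2`. -/
lemma segBound {a b : ℝ × ℝ} (hco : H.covisible a b) (hy : a.2 < 0)
    {k : Fin H.m} {x0 : ℝ} (h1 : H.xs k.castSucc < x0) (h2 : x0 < H.xs k.succ)
    (h3 : min a.1 b.1 ≤ x0) (h4 : x0 ≤ max a.1 b.1) : H.d k ≤ a.2 := by
  have hmem : (x0, a.2) ∈ H.region := by
    apply hco
    rw [Set.mem_prod]
    exact ⟨Set.mem_Icc.mpr ⟨h3, h4⟩, Set.mem_Icc.mpr ⟨min_le_left _ _, le_max_left _ _⟩⟩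
  exact H.region_col hmem hy h1 h2

lemma rreflex_shape (hS : H.n = 1) {v : ℝ × ℝ} (h : H.IsRReflex v) :
    ∃ i : Fin H.m, (i : ℕ) + 1 < H.m ∧ v = (H.xs i.succ, H.d i) := by
  rcases h with ⟨i, hi, hv, _⟩ | ⟨j, hj, _⟩
  · exact ⟨i, hi, hv⟩
  · exfalso; have := j.isLt; omega

lemma lreflex_shape (hS : H.n = 1) {w : ℝ × ℝ} (h : H.IsLReflex w) :
    ∃ i : Fin H.m, 0 < (i : ℕ) ∧ w = (H.xs i.castSucc, H.d i) := by
  rcases h with ⟨i, hi, hv, _⟩ | ⟨j, hj, _⟩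
  · exact ⟨i, hi, hv⟩
  · exfalso; have := j.isLt; omega

/-- The crossing lemma: no edge of the visibility graph jumps over the interval
border `{v, w}`. -/
lemma cross (hS : H.n = 1)
    {v w a b : ℝ × ℝ} (hv : v ∈ H.verts) (hw : w ∈ H.verts)
    (hvw : v.1 ≤ w.1) (hco : H.covisible v w)
    (hvc : H.IsRReflex v ∨ v = H.baseL) (hwc : H.IsLReflex w ∨ w = H.baseR)
    (ha : a ∈ H.ivl v w) (hb : b ∈ H.verts) (hbout : b ∉ H.ivl v w)
    (hab : H.covisible a b) : a = v ∨ a = w := by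
  obtain ⟨haV, hva, haw⟩ := ha
  rcases eq_or_lt_of_le hvw with heq | hlt
  · -- degenerate case v.1 = w.1
    have hax : a.1 = v.1 := le_antisymm (by rw [heq]; exact haw) hva
    rcases hvc with hvr | hvl
    · obtain ⟨i, hi, hvs⟩ := H.rreflex_shape hS hvr
      have hv1 : v.1 = H.xs i.succ := by rw [hvs]
      rcases hwc with hwr | hwR
      · obtain ⟨i', hi', hws⟩ := H.lreflex_shape hS hwr
        have hw1 : w.1 = H.xs i'.castSucc := by rw [hws]
        rcases H.verts_classify hS haV with ⟨k, hk | hk⟩ | haL | haR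
        · right
          have hxx : H.xs k.castSucc = H.xs i'.castSucc := by
            rw [← hw1, ← heq, ← hax, hk]
          have hki : k = i' := Fin.castSucc_injective _ (H.xs_inj hxx)
          rw [hk, hki, ← hws]
        · left
          have hxx : H.xs k.succ = H.xs i.succ := by rw [← hv1, ← hax, hk]
          have hki : k = i := Fin.succ_injective _ (H.xs_inj hxx)
          rw [hk, hki, ← hvs]
        · exfalso
          have hxx : H.xs 0 = H.xs i.succ := by rw [← hv1, ← hax, haL]; rfl
          have hc := congrArg Fin.val (H.xs_inj hxx)
          simp at hc
        · exfalso
          have hxx : H.xs (Fin.last H.m) = H.xs i.succ := by rw [← hv1, ← hax, haR]; rfl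
          have hc := congrArg Fin.val (H.xs_inj hxx)
          simp [Fin.val_last] at hc
          omega
      · exfalso
        have hxx : H.xs i.succ = H.xs (Fin.last H.m) := by
          rw [hvs, hwR] at heq; exact heq
        have hc := congrArg Fin.val (H.xs_inj hxx)
        simp [Fin.val_last] at hc
        omega
    · rcases hwc with hwr | hwR
      · obtain ⟨i', hi', hws⟩ := H.lreflex_shape hS hwr
        exfalso
        have hxx : H.xs 0 = H.xs i'.castSucc := by
          rw [hvl, hws] at heq; exact heq
        have hc := congrArg Fin.val (H.xs_inj hxx)
        simp at hc
        omega
      · exfalso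
        have hxx : H.xs 0 = H.xs (Fin.last H.m) := by
          rw [hvl, hwR] at heq; exact heq
        have hc := congrArg Fin.val (H.xs_inj hxx)
        simp [Fin.val_last] at hc
        have hm := H.hm
        omega
  · -- main case v.1 < w.1
    rcases lt_or_ge b.1 v.1 with hbv | hbv
    · -- b is strictly left of v
      have hb0 : H.xs 0 ≤ b.1 := (H.verts_xrange hS hb).1
      have hvr : H.IsRReflex v := by
        rcases hvc with h | h
        · exact h
        · exfalso
          rw [h] at hbv
          simp only [baseL] at hbv
          linarith
      obtain ⟨i, hi, hvs⟩ := H.rreflex_shape hS hvr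
      have hv1 : v.1 = H.xs i.succ := by rw [hvs]
      have hv2 : v.2 = H.d i := by rw [hvs]
      rcases H.verts_classify hS haV with ⟨k, hk⟩ | haL | haR
      · -- a is a bottom vertex of column k
        have hdk2 : a.2 = H.d k := by rcases hk with hk | hk <;> rw [hk]
        have hdkneg : a.2 < 0 := by rw [hdk2]; exact H.d_neg k
        have hcc : H.xs i.castSucc < H.xs i.succ := H.xs_mono (Fin.castSucc_lt_succ : Fin.castSucc i < Fin.succ i)
        have hbv' : b.1 < H.xs i.succ := by rw [← hv1]; exact hbv
        have hva' : H.xs i.succ ≤ a.1 := by rw [← hv1]; exact hva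
        -- step A: d i ≤ a.2
        have hA : H.d i ≤ H.d k := by
          set x0 := (max b.1 (H.xs i.castSucc) + H.xs i.succ) / 2 with hx0
          have hmax : max b.1 (H.xs i.castSucc) < H.xs i.succ := max_lt hbv' hcc
          have h1 : H.xs i.castSucc < x0 := by
            have hr := le_max_right b.1 (H.xs i.castSucc)
            rw [hx0]; linarith
          have h2 : x0 < H.xs i.succ := by rw [hx0]; linarith
          have h3 : min a.1 b.1 ≤ x0 := by
            have hl := le_max_left b.1 (H.xs i.castSucc)
            have hb1 : b.1 ≤ x0 := by rw [hx0]; linarith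
            exact le_trans (min_le_right _ _) hb1
          have h4 : x0 ≤ max a.1 b.1 :=
            le_trans (le_of_lt (lt_of_lt_of_le h2 hva')) (le_max_left _ _)
          have hsb := H.segBound hab hdkneg h1 h2 h3 h4
          rwa [hdk2] at hsb
        have hMneg : min v.2 w.2 < 0 := by
          refine lt_of_le_of_lt (min_le_left _ _) ?_
          rw [hv2]; exact H.d_neg i
        have hMv : min v.2 w.2 ≤ H.d i := by rw [← hv2]; exact min_le_left _ _
        rcases hk with hk | hk
        · -- a = (xs k.castSucc, d k)
          have hax : a.1 = H.xs k.castSucc := by rw [hk]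
          have haw' : H.xs k.castSucc ≤ w.1 := by rw [← hax]; exact haw
          rcases eq_or_lt_of_le haw' with hEq | hLt
          · -- a.1 = w.1
            rcases hwc with hwr | hwR
            · obtain ⟨i', hi', hws⟩ := H.lreflex_shape hS hwr
              right
              have hw1 : w.1 = H.xs i'.castSucc := by rw [hws]
              have hki : k = i' := Fin.castSucc_injective _ (H.xs_inj (by rw [hEq, hw1]))
              rw [hk, hki, ← hws]
            · exfalso
              have hw1 : w.1 = H.xs (Fin.last H.m) := by rw [hwR]; rfl
              have hxx : H.xs k.castSucc = H.xs (Fin.last H.m) := by rw [hEq, hw1]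
              have hc := congrArg Fin.val (H.xs_inj hxx)
              simp [Fin.val_last] at hc
              omega
          · exfalso
            have h2' : v.1 < H.xs k.succ :=
              lt_of_le_of_lt (by rw [← hax]; exact hva) (H.xs_mono (Fin.castSucc_lt_succ : Fin.castSucc k < Fin.succ k))
            have hB := H.colBound hco hlt hMneg hLt h2'
            have hki : k = i := H.d_inj (le_antisymm (le_trans hB hMv) hA)
            have hcon := hva'.trans (le_of_eq hax)
            rw [hki] at hcon
            linarith
        · -- a = (xs k.succ, d k)
          have hax : a.1 = H.xs k.succ := by rw [hk]
          by_cases hEq : v.1 = H.xs k.succ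
          · left
            have hik : i = k := Fin.succ_injective _ (H.xs_inj (by rw [← hv1, hEq]))
            rw [hk, ← hik, ← hvs]
          · have hv1' : v.1 < H.xs k.succ :=
              lt_of_le_of_ne (by rw [← hax]; exact hva) hEq
            have h1' : H.xs k.castSucc < w.1 :=
              lt_of_lt_of_le (H.xs_mono (Fin.castSucc_lt_succ : Fin.castSucc k < Fin.succ k)) (by rw [← hax]; exact haw)
            have hB := H.colBound hco hlt hMneg h1' hv1'
            have hki : k = i := H.d_inj (le_antisymm (le_trans hB hMv) hA)
            left
            rw [hk, hki, ← hvs]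
      · -- a = baseL : impossible since v.1 > xs 0
        exfalso
        have hax : a.1 = H.xs 0 := by rw [haL]; rfl
        have hlt0 : H.xs 0 < H.xs i.succ := H.xs_mono (Fin.succ_pos i)
        have : v.1 ≤ H.xs 0 := by rw [← hax]; exact hva
        rw [hv1] at this
        linarith
      · -- a = baseR : then w = baseR and a = w
        have hax : a.1 = H.xs (Fin.last H.m) := by rw [haR]; rfl
        have hwx : w.1 ≤ H.xs (Fin.last H.m) := (H.verts_xrange hS hw).2
        have hweq : w.1 = H.xs (Fin.last H.m) :=
          le_antisymm hwx (by rw [← hax]; exact haw)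
        rcases hwc with hwr | hwR
        · exfalso
          obtain ⟨i', hi', hws⟩ := H.lreflex_shape hS hwr
          have hw1 : w.1 = H.xs i'.castSucc := by rw [hws]
          have hxx : H.xs i'.castSucc = H.xs (Fin.last H.m) := by rw [← hw1, hweq]
          have hc := congrArg Fin.val (H.xs_inj hxx)
          simp [Fin.val_last] at hc
          omega
        · right; rw [haR, hwR]
    · rcases lt_or_ge w.1 b.1 with hbw | hbw
      · -- b is strictly right of w
        have hbm : b.1 ≤ H.xs (Fin.last H.m) := (H.verts_xrange hS hb).2
        have hwr : H.IsLReflex w := by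
          rcases hwc with h | h
          · exact h
          · exfalso
            rw [h] at hbw
            simp only [baseR] at hbw
            linarith
        obtain ⟨i', hi', hws⟩ := H.lreflex_shape hS hwr
        have hw1 : w.1 = H.xs i'.castSucc := by rw [hws]
        have hw2 : w.2 = H.d i' := by rw [hws]
        rcases H.verts_classify hS haV with ⟨k, hk⟩ | haL | haR
        · -- a is a bottom vertex of column k
          have hdk2 : a.2 = H.d k := by rcases hk with hk | hk <;> rw [hk]
          have hdkneg : a.2 < 0 := by rw [hdk2]; exact H.d_neg k
          have hcc : H.xs i'.castSucc < H.xs i'.succ := H.xs_mono (Fin.castSucc_lt_succ : Fin.castSucc i' < Fin.succ i')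
          have hbw' : H.xs i'.castSucc < b.1 := by rw [← hw1]; exact hbw
          have haw' : a.1 ≤ H.xs i'.castSucc := by rw [← hw1]; exact haw
          -- step A': d i' ≤ d k
          have hA : H.d i' ≤ H.d k := by
            set x0 := (H.xs i'.castSucc + min b.1 (H.xs i'.succ)) / 2 with hx0
            have hmin : H.xs i'.castSucc < min b.1 (H.xs i'.succ) := lt_min hbw' hcc
            have h1 : H.xs i'.castSucc < x0 := by rw [hx0]; linarith
            have h2 : x0 < H.xs i'.succ := by
              have hr := min_le_right b.1 (H.xs i'.succ)
              rw [hx0]; linarith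
            have hxb : x0 < b.1 := by
              have hl := min_le_left b.1 (H.xs i'.succ)
              rw [hx0]; linarith
            have h3 : min a.1 b.1 ≤ x0 :=
              le_trans (min_le_left _ _) (le_trans haw' (le_of_lt h1))
            have h4 : x0 ≤ max a.1 b.1 := le_trans (le_of_lt hxb) (le_max_right _ _)
            have hsb := H.segBound hab hdkneg h1 h2 h3 h4
            rwa [hdk2] at hsb
          have hMneg : min v.2 w.2 < 0 := by
            refine lt_of_le_of_lt (min_le_right _ _) ?_
            rw [hw2]; exact H.d_neg i'
          have hMw : min v.2 w.2 ≤ H.d i' := by rw [← hw2]; exact min_le_right _ _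
          rcases hk with hk | hk
          · -- a = (xs k.castSucc, d k)
            have hax : a.1 = H.xs k.castSucc := by rw [hk]
            have haw'' : H.xs k.castSucc ≤ w.1 := by rw [← hax]; exact haw
            rcases eq_or_lt_of_le haw'' with hEq | hLt
            · right
              have hki : k = i' := Fin.castSucc_injective _ (H.xs_inj (by rw [hEq, hw1]))
              rw [hk, hki, ← hws]
            · have h2' : v.1 < H.xs k.succ :=
                lt_of_le_of_lt (by rw [← hax]; exact hva) (H.xs_mono (Fin.castSucc_lt_succ : Fin.castSucc k < Fin.succ k))
              have hB := H.colBound hco hlt hMneg hLt h2'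
              have hki : k = i' := H.d_inj (le_antisymm (le_trans hB hMw) hA)
              right
              rw [hk, hki, ← hws]
          · -- a = (xs k.succ, d k)
            have hax : a.1 = H.xs k.succ := by rw [hk]
            by_cases hEq : v.1 = H.xs k.succ
            · rcases hvc with hvrr | hvl
              · obtain ⟨i, hi, hvs⟩ := H.rreflex_shape hS hvrr
                left
                have hv1 : v.1 = H.xs i.succ := by rw [hvs]
                have hik : i = k := Fin.succ_injective _ (H.xs_inj (by rw [← hv1, hEq]))
                rw [hk, ← hik, ← hvs]
              · exfalso
                have hv1 : v.1 = H.xs 0 := by rw [hvl]; rfl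
                have hxx : H.xs 0 = H.xs k.succ := by rw [← hv1, hEq]
                have hc := congrArg Fin.val (H.xs_inj hxx)
                simp at hc
            · have hv1' : v.1 < H.xs k.succ :=
                lt_of_le_of_ne (by rw [← hax]; exact hva) hEq
              have h1' : H.xs k.castSucc < w.1 :=
                lt_of_lt_of_le (H.xs_mono (Fin.castSucc_lt_succ : Fin.castSucc k < Fin.succ k)) (by rw [← hax]; exact haw)
              have hB := H.colBound hco hlt hMneg h1' hv1'
              have hki : k = i' := H.d_inj (le_antisymm (le_trans hB hMw) hA)
              exfalso
              have hcon : H.xs k.succ ≤ H.xs i'.castSucc := by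
                rw [← hax]; exact haw'
              rw [hki] at hcon
              linarith
        · -- a = baseL : then v = baseL and a = v
          have hax : a.1 = H.xs 0 := by rw [haL]; rfl
          have hvx : H.xs 0 ≤ v.1 := (H.verts_xrange hS hv).1
          have hveq : v.1 = H.xs 0 := le_antisymm (by rw [← hax]; exact hva) hvx
          rcases hvc with hvrr | hvl
          · exfalso
            obtain ⟨i, hi, hvs⟩ := H.rreflex_shape hS hvrr
            have hv1 : v.1 = H.xs i.succ := by rw [hvs]
            have hxx : H.xs i.succ = H.xs 0 := by rw [← hv1, hveq]
            have hc := congrArg Fin.val (H.xs_inj hxx)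
            simp at hc
          · left; rw [haL, hvl]
        · -- a = baseR : impossible since w.1 < xs last
          exfalso
          have hax : a.1 = H.xs (Fin.last H.m) := by rw [haR]; rfl
          have hlast : H.xs i'.castSucc < H.xs (Fin.last H.m) :=
            H.xs_mono (Fin.castSucc_lt_last i')
          have : a.1 ≤ H.xs i'.castSucc := by rw [← hw1]; exact haw
          rw [hax] at this
          linarith
      · exact absurd ⟨hb, hbv, hbw⟩ hbout

lemma walk_cross (hS : H.n = 1)
    {v w : ℝ × ℝ} (hv : v ∈ H.verts) (hw : w ∈ H.verts)
    (hvw : v.1 ≤ w.1) (hco : H.covisible v w)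
    (hvc : H.IsRReflex v ∨ v = H.baseL) (hwc : H.IsLReflex w ∨ w = H.baseR)
    {s t : ↥H.verts} (p : H.visGraph.Walk s t)
    (hs : (s : ℝ × ℝ) ∈ H.ivl v w) (ht : (t : ℝ × ℝ) ∉ H.ivl v w) :
    ∃ z ∈ p.support, ((z : ℝ × ℝ) = v ∨ (z : ℝ × ℝ) = w) := by
  revert hs ht
  induction p with
  | nil => exact fun hs ht => absurd hs ht
  | @cons u c t' hadj q ih =>
    intro hs ht
    by_cases hc : (c : ℝ × ℝ) ∈ H.ivl v w
    · obtain ⟨z, hz1, hz2⟩ := ih hc ht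
      exact ⟨z, by rw [SimpleGraph.Walk.support_cons]; exact List.mem_cons_of_mem _ hz1, hz2⟩
    · have hres := H.cross hS hv hw hvw hco hvc hwc hs c.2 hc (show u ≠ c ∧ H.covisible ↑u ↑c from hadj).2
      exact ⟨u, SimpleGraph.Walk.start_mem_support _, hres⟩

end DoubleHistogram

/-- In a simple histogram, let `v, w` be co-visible vertices with `v`
`r`-reflex or the left base vertex and `w` `ℓ`-reflex or the right base vertex; let
`s ∈ [v, w]` and `t ∉ [v, w]`.  Then every path in `G(P)` from `s` to `t` includes `v`
or `w`. -/
theorem any_path_includes_interval_border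
    (H : DoubleHistogram) (hSimple : H.n = 1)
    (v w : ℝ × ℝ) (hv : v ∈ H.verts) (hw : w ∈ H.verts)
    (hvw : v.1 ≤ w.1) (hco : H.covisible v w)
    (hvc : H.IsRReflex v ∨ v = H.baseL) (hwc : H.IsLReflex w ∨ w = H.baseR)
    (s t : ↥H.verts) (hs : (s : ℝ × ℝ) ∈ H.ivl v w) (ht : (t : ℝ × ℝ) ∉ H.ivl v w)
    (p : H.visGraph.Walk s t) (hp : p.IsPath) :
    (∃ z ∈ p.support, (z : ℝ × ℝ) = v) ∨ ∃ z ∈ p.support, (z : ℝ × ℝ) = w := by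
  obtain ⟨z, hz, hzvw⟩ := H.walk_cross hSimple hv hw hvw hco hvc hwc p hs ht
  rcases hzvw with h | h
  · exact Or.inl ⟨z, hz, h⟩
  · exact Or.inr ⟨z, hz, h⟩
end
end
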